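/- Let α₁, …, α_n ∈ F_q be distinct and suppose the Reed–Solomon code RS_{n,k}(α₁,…,α_n) is robust against the (n−2k+1)-permutation-insdel adversary. Then for every pair of distinct-element sequences I, J ∈ [n]^{2k−1}, every vector v = (f₀, f₁, …, f_{k−1}, −g₁, …, −g_{k−1}) in the right kernel of V_{I,J}(α) satisfies f₀ = 0 and f_i = g_i for all i ∈ [k−1]. -/

import Mathlib

/-- The `(2k-1) × (2k-1)` matrix `V_{I,J}(α)` with `s`-th row
`(1, α_{I_s}, …, α_{I_s}^{k-1}, α_{J_s}, …, α_{J_s}^{k-1})`. -/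
def Vmat {R : Type*} [CommRing R] (k n : ℕ) (x : Fin n → R)
    (I J : Fin (2 * k - 1) → Fin n) :
    Matrix (Fin (2 * k - 1)) (Fin (2 * k - 1)) R :=
  Matrix.of fun s c =>
    if (c : ℕ) = 0 then 1
    else if (c : ℕ) < k then x (I s) ^ (c : ℕ)
    else x (J s) ^ ((c : ℕ) - k + 1)

/-- The vector `(f₀, f₁, …, f_{k-1}, -g₁, …, -g_{k-1}) ∈ F^{2k-1}`. -/
def buildVec {F : Type*} [Field F] (k : ℕ) (f g : Fin k → F) (j : Fin (2 * k - 1)) : F :=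
  if h : (j : ℕ) < k then f ⟨j, h⟩
  else -g ⟨(j : ℕ) - k + 1, by have := j.isLt; omega⟩

/-- Robustness of `RS_{n,k}(α)` against the `(n-2k+1)`-permutation-insdel adversary,
via the equivalent characterization: for distinct codewords `c, c'` and distinct-element
sequences `I, J` of length `2k-1`, the tuples `c_I` and `c'_J` differ. -/
def RSRobust {F : Type*} [Field F] (n k : ℕ) (α : Fin n → F) : Prop :=
  ∀ f g : Polynomial F, f.degree < k → g.degree < k → f ≠ g →
    ∀ I J : Fin (2 * k - 1) → Fin n, Function.Injective I → Function.Injective J →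
      (fun s => f.eval (α (I s))) ≠ (fun s => g.eval (α (J s)))

open Polynomial in
lemma coeffP {F : Type*} [Field F] {k : ℕ} (f : Fin k → F) (i : Fin k) :
    (∑ j : Fin k, Polynomial.C (f j) * Polynomial.X ^ (j : ℕ)).coeff (i : ℕ) = f i := by
  rw [Polynomial.finset_sum_coeff]
  rw [Finset.sum_eq_single i]
  · simp
  · intro b _ hb
    simp only [coeff_C_mul, coeff_X_pow]
    rw [if_neg, mul_zero]
    exact fun h => hb (Fin.ext h.symm)
  · simp

open Polynomial in
lemma degP {F : Type*} [Field F] {k : ℕ} (hk : 0 < k) (f : Fin k → F) :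
    (∑ j : Fin k, Polynomial.C (f j) * Polynomial.X ^ (j : ℕ)).degree < (k : WithBot ℕ) := by
  apply lt_of_le_of_lt (Polynomial.degree_sum_le _ _)
  rw [Finset.sup_lt_iff]
  · intro i _
    exact lt_of_le_of_lt (Polynomial.degree_C_mul_X_pow_le _ _)
      (by exact_mod_cast i.isLt)
  · exact_mod_cast WithBot.bot_lt_coe k

lemma keySum {F : Type*} [Field F] (k n : ℕ) (hk : 0 < k) (α : Fin n → F)
    (I J : Fin (2 * k - 1) → Fin n) (f g : Fin k → F) (hg0 : g ⟨0, hk⟩ = 0)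
    (s : Fin (2 * k - 1)) :
    ∑ c : Fin (2 * k - 1), Vmat k n α I J s c * buildVec k f g c
      = (∑ i : Fin k, f i * α (I s) ^ (i : ℕ))
        - (∑ i : Fin k, g i * α (J s) ^ (i : ℕ)) := by
  obtain ⟨m, rfl⟩ : ∃ m, k = m + 1 := ⟨k - 1, by omega⟩
  set a := α (I s) with ha
  set b := α (J s) with hb
  set t : ℕ → F := fun c =>
    (if c = 0 then 1 else if c < (m + 1) then a ^ c else b ^ (c - (m + 1) + 1)) *
      (if h : c < (m + 1) then f ⟨c, h⟩ else if h2 : c - (m + 1) + 1 < (m + 1) then -g ⟨c - (m + 1) + 1, h2⟩ else 0)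
    with ht
  have h1 : ∑ c : Fin (2 * (m + 1) - 1), Vmat (m + 1) n α I J s c * buildVec (m + 1) f g c
      = ∑ c ∈ Finset.range (2 * (m + 1) - 1), t c := by
    rw [← Fin.sum_univ_eq_sum_range]
    apply Finset.sum_congr rfl
    intro c _
    simp only [ht, Vmat, buildVec, Matrix.of_apply]
    by_cases h : (c : ℕ) < (m + 1)
    · simp [h, ha]
    · have h2 : (c : ℕ) - (m + 1) + 1 < (m + 1) := by have := c.isLt; omega
      simp [h, h2, hb]
  rw [h1]
  have hsplit : 2 * (m + 1) - 1 = (m + 1) + m := by omega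
  rw [hsplit, Finset.sum_range_add]
  have hA : ∑ i ∈ Finset.range (m + 1), t i = ∑ i : Fin (m + 1), f i * a ^ (i : ℕ) := by
    rw [Finset.sum_congr rfl (fun i hi => ?_), ← Fin.sum_univ_eq_sum_range
      (fun i => if h : i < (m + 1) then f ⟨i, h⟩ * a ^ i else 0) (m + 1)]
    · apply Finset.sum_congr rfl
      intro i _
      simp [i.isLt]
    · rw [Finset.mem_range] at hi
      rcases Nat.eq_zero_or_pos i with h0 | h0
      · subst h0; simp [ht, hk]
      · simp only [ht]
        rw [if_neg (by omega), if_pos hi, dif_pos hi, dif_pos hi]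
        ring
  have hB : ∑ i ∈ Finset.range m, t ((m + 1) + i) = -∑ i : Fin (m + 1), g i * b ^ (i : ℕ) := by
    have hu : ∑ i : Fin (m + 1), g i * b ^ (i : ℕ)
        = ∑ i ∈ Finset.range (m + 1), (fun i : ℕ =>
            if h : i < (m + 1) then g ⟨i, h⟩ * b ^ i else 0) i := by
      rw [← Fin.sum_univ_eq_sum_range]
      exact Finset.sum_congr rfl fun i _ => by simp [i.isLt]
    rw [hu, Finset.sum_range_succ']
    have h00 : (if h : 0 < (m + 1) then g ⟨0, h⟩ * b ^ 0 else 0) = 0 := by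
      rw [dif_pos hk]
      simp only [pow_zero, mul_one]
      simpa using hg0
    simp only [h00, add_zero, neg_eq_iff_eq_neg.symm]
    rw [← Finset.sum_neg_distrib]
    apply Finset.sum_congr rfl
    intro i hi
    rw [Finset.mem_range] at hi
    have h1 : ¬ ((m + 1) + i = 0) := by omega
    have h2 : ¬ ((m + 1) + i < (m + 1)) := by omega
    have h3 : (m + 1) + i - (m + 1) + 1 = i + 1 := by omega
    have h4 : i + 1 < (m + 1) := by omega
    simp only [ht, if_neg h1, if_neg h2, dif_neg h2, h3, dif_pos h4]
    ring
  rw [hA, hB]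
  ring

theorem stmt9 {F : Type*} [Field F] (n k : ℕ) (hk : 0 < k) (hkn : 2 * k - 1 ≤ n)
    (α : Fin n → F) (hα : Function.Injective α)
    (hrob : RSRobust n k α)
    (I J : Fin (2 * k - 1) → Fin n)
    (hI : Function.Injective I) (hJ : Function.Injective J)
    (f g : Fin k → F) (hg0 : g ⟨0, hk⟩ = 0)
    (hker : (Vmat k n α I J).mulVec (buildVec k f g) = 0) :
    f ⟨0, hk⟩ = 0 ∧ ∀ i : Fin k, f i = g i := by
  set Fp := ∑ j : Fin k, Polynomial.C (f j) * Polynomial.X ^ (j : ℕ) with hFp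
  set Gp := ∑ j : Fin k, Polynomial.C (g j) * Polynomial.X ^ (j : ℕ) with hGp
  have hevF : ∀ x : F, Fp.eval x = ∑ i : Fin k, f i * x ^ (i : ℕ) := by
    intro x; simp [hFp, Polynomial.eval_finset_sum]
  have hevG : ∀ x : F, Gp.eval x = ∑ i : Fin k, g i * x ^ (i : ℕ) := by
    intro x; simp [hGp, Polynomial.eval_finset_sum]
  have heq : Fp = Gp := by
    by_contra h
    have hEv : (fun s => Fp.eval (α (I s))) = fun s => Gp.eval (α (J s)) := by
      funext s
      have h0 := congrFun hker s
      simp only [Matrix.mulVec, dotProduct, Pi.zero_apply] at h0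
      rw [keySum k n hk α I J f g hg0 s] at h0
      rw [hevF, hevG]
      exact sub_eq_zero.mp h0
    exact hrob Fp Gp (degP hk f) (degP hk g) h I J hI hJ hEv
  have hcoef : ∀ i : Fin k, f i = g i := by
    intro i
    have h2 := congrArg (fun p => p.coeff (i : ℕ)) heq
    simp only [hFp, hGp] at h2
    rwa [coeffP, coeffP] at h2
  exact ⟨by rw [hcoef ⟨0, hk⟩, hg0], hcoef⟩
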